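/- Let T be a marginally large semistandard tableau for A_n (n rows; for each 1 ≤ i ≤ n the number of i-entries in row i exceeds the total number of boxes in row i+1 by exactly one, with row n+1 interpreted as empty). Encode T by the counts b_j^i of j-entries in row i for i < j ≤ n+1. Then the shape of T is determined by the b_j^i: row i of T has exactly 1 + ∑_{r=i+1}^{n} (1 + ∑_{k=r+1}^{n+1} b_k^r) + ∑_{k=i+1}^{n+1} b_k^i boxes, and the map from marginally large tableaux to arbitrary families (b_j^i) of nonnegative integers (1 ≤ i ≤ n, i < j ≤ n+1) is a bijection. -/

import Mathlib

open Finset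

/-- `T` (with row lengths `L`) is a marginally large semistandard tableau for
`A_n`: `n` nonempty rows forming a Young diagram, entries of row `i` lie in
`{i, …, n+1}`, rows weakly increase, columns strictly increase, and for each
`1 ≤ i ≤ n` the number of `i`-entries in row `i` exceeds the total number of
boxes of row `i+1` by exactly one (row `n+1` being empty). Everything is
normalized to `0` outside the diagram. -/
def IsMarginallyLarge (n : ℕ) (L : ℕ → ℕ) (T : ℕ → ℕ → ℕ) : Prop :=
  (∀ i, ¬(1 ≤ i ∧ i ≤ n) → L i = 0) ∧
  (∀ i j, ¬(1 ≤ i ∧ i ≤ n ∧ j < L i) → T i j = 0) ∧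
  (∀ i, 1 ≤ i → i ≤ n → 1 ≤ L i) ∧
  (∀ i, 1 ≤ i → i < n → L (i + 1) ≤ L i) ∧
  (∀ i j, 1 ≤ i → i ≤ n → j < L i → i ≤ T i j ∧ T i j ≤ n + 1) ∧
  (∀ i j, 1 ≤ i → i ≤ n → j + 1 < L i → T i j ≤ T i (j + 1)) ∧
  (∀ i j, 1 ≤ i → i < n → j < L (i + 1) → T i j < T (i + 1) j) ∧
  (∀ i, 1 ≤ i → i ≤ n →
    ((Finset.range (L i)).filter (fun j => T i j = i)).card = L (i + 1) + 1)

/-- The number of `j`-entries in row `i` of `T`. -/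
def entryCount (L : ℕ → ℕ) (T : ℕ → ℕ → ℕ) (j i : ℕ) : ℕ :=
  ((Finset.range (L i)).filter (fun c => T i c = j)).card

namespace MLAux

/-- Total number of off-diagonal entries prescribed for row `i`. -/
def B (n : ℕ) (b : ℕ → ℕ → ℕ) (i : ℕ) : ℕ := ∑ k ∈ Finset.Icc (i + 1) (n + 1), b k i

/-- Canonical row lengths. -/
def Lc (n : ℕ) (b : ℕ → ℕ → ℕ) (i : ℕ) : ℕ :=
  if 1 ≤ i ∧ i ≤ n then
    1 + (∑ r ∈ Finset.Icc (i + 1) n, (1 + B n b r)) + B n b i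
  else 0

lemma Lc_of_not (n : ℕ) (b : ℕ → ℕ → ℕ) {i : ℕ} (h : ¬(1 ≤ i ∧ i ≤ n)) :
    Lc n b i = 0 := if_neg h

lemma Lc_rec (n : ℕ) (b : ℕ → ℕ → ℕ) {i : ℕ} (h1 : 1 ≤ i) (h2 : i ≤ n) :
    Lc n b i = Lc n b (i + 1) + 1 + B n b i := by
  rcases eq_or_lt_of_le h2 with h | h
  · rw [Lc, if_pos ⟨h1, h2⟩, Lc_of_not n b (by omega),
      show Finset.Icc (i + 1) n = ∅ from Finset.Icc_eq_empty (by omega)]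
    simp [add_comm]
  · rw [Lc, if_pos ⟨h1, h2⟩, Lc, if_pos (by omega : 1 ≤ i + 1 ∧ i + 1 ≤ n)]
    have hsplit : ∑ r ∈ Finset.Icc (i + 1) n, (1 + B n b r)
        = (1 + B n b (i + 1)) + ∑ r ∈ Finset.Icc (i + 2) n, (1 + B n b r) := by
      rw [show Finset.Icc (i + 2) n = Finset.Ioc (i + 1) n from
        (Finset.Icc_add_one_left_eq_Ioc _ _)]
      exact (Finset.add_sum_Ioc_eq_sum_Icc (by omega)).symm
    rw [hsplit]; ring

/-- Prescribed multiplicity of the value `j` in row `i`. -/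
def cnt (n : ℕ) (b : ℕ → ℕ → ℕ) (i j : ℕ) : ℕ :=
  if j = i then Lc n b (i + 1) + 1 else b j i

/-- Partial sums of multiplicities: number of cells of row `i` with value `≤ j`. -/
def S (n : ℕ) (b : ℕ → ℕ → ℕ) (i j : ℕ) : ℕ := ∑ v ∈ Finset.Icc i j, cnt n b i v

lemma S_mono (n : ℕ) (b : ℕ → ℕ → ℕ) (i : ℕ) {j j' : ℕ} (h : j ≤ j') :
    S n b i j ≤ S n b i j' :=
  Finset.sum_le_sum_of_subset (Finset.Icc_subset_Icc_right h)

lemma S_lo (n : ℕ) (b : ℕ → ℕ → ℕ) {i j : ℕ} (h : j < i) : S n b i j = 0 := by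
  rw [S, Finset.Icc_eq_empty (by omega), Finset.sum_empty]

lemma S_top (n : ℕ) (b : ℕ → ℕ → ℕ) {i : ℕ} (h1 : 1 ≤ i) (h2 : i ≤ n) :
    S n b i (n + 1) = Lc n b i := by
  rw [S]
  have hsplit : ∑ v ∈ Finset.Icc i (n + 1), cnt n b i v
      = cnt n b i i + ∑ v ∈ Finset.Icc (i + 1) (n + 1), cnt n b i v := by
    rw [show Finset.Icc (i + 1) (n + 1) = Finset.Ioc i (n + 1) from
      (Finset.Icc_add_one_left_eq_Ioc _ _)]
    exact (Finset.add_sum_Ioc_eq_sum_Icc (by omega)).symm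
  have hoff : ∑ v ∈ Finset.Icc (i + 1) (n + 1), cnt n b i v = B n b i := by
    apply Finset.sum_congr rfl
    intro v hv
    rw [Finset.mem_Icc] at hv
    rw [cnt, if_neg (by omega)]
  rw [hsplit, hoff, cnt, if_pos rfl, Lc_rec n b h1 h2]

lemma S_le (n : ℕ) (b : ℕ → ℕ → ℕ) {i j : ℕ} (h1 : 1 ≤ i) (h2 : i ≤ n)
    (h3 : j ≤ n + 1) : S n b i j ≤ Lc n b i := by
  rw [← S_top n b h1 h2]; exact S_mono n b i h3

lemma S_step (n : ℕ) (b : ℕ → ℕ → ℕ) {i j : ℕ} (h1 : 1 ≤ i) (h2 : i ≤ j) :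
    S n b i j = S n b i (j - 1) + cnt n b i j := by
  have hj : j = (j - 1) + 1 := by omega
  rw [S, S]
  conv_lhs => rw [hj]
  rw [Finset.sum_Icc_succ_top (by omega), ← hj]

/-- Canonical tableau entries. -/
noncomputable def Tc (n : ℕ) (b : ℕ → ℕ → ℕ) (i c : ℕ) : ℕ :=
  if 1 ≤ i ∧ i ≤ n ∧ c < Lc n b i then sInf {j | c < S n b i j} else 0

lemma Tc_le_iff (n : ℕ) (b : ℕ → ℕ → ℕ) {i c : ℕ} (h1 : 1 ≤ i) (h2 : i ≤ n)
    (hc : c < Lc n b i) (j : ℕ) : Tc n b i c ≤ j ↔ c < S n b i j := by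
  rw [Tc, if_pos ⟨h1, h2, hc⟩]
  have hne : {j | c < S n b i j}.Nonempty := by
    exact ⟨n + 1, by rw [Set.mem_setOf_eq, S_top n b h1 h2]; exact hc⟩
  constructor
  · intro h
    have := Nat.sInf_mem hne
    rw [Set.mem_setOf_eq] at this
    exact lt_of_lt_of_le this (S_mono n b i h)
  · intro h; exact Nat.sInf_le h

lemma Tc_ge (n : ℕ) (b : ℕ → ℕ → ℕ) {i c : ℕ} (h1 : 1 ≤ i) (h2 : i ≤ n)
    (hc : c < Lc n b i) : i ≤ Tc n b i c := by
  by_contra h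
  have : Tc n b i c ≤ i - 1 := by omega
  rw [Tc_le_iff n b h1 h2 hc] at this
  rw [S_lo n b (by omega)] at this
  omega

lemma Tc_le_top (n : ℕ) (b : ℕ → ℕ → ℕ) {i c : ℕ} (h1 : 1 ≤ i) (h2 : i ≤ n)
    (hc : c < Lc n b i) : Tc n b i c ≤ n + 1 := by
  rw [Tc_le_iff n b h1 h2 hc, S_top n b h1 h2]; exact hc

lemma Tc_filter_eq (n : ℕ) (b : ℕ → ℕ → ℕ) {i j : ℕ} (h1 : 1 ≤ i) (h2 : i ≤ n)
    (hij : i ≤ j) (hj : j ≤ n + 1) :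
    (Finset.range (Lc n b i)).filter (fun c => Tc n b i c = j)
      = Finset.Ico (S n b i (j - 1)) (S n b i j) := by
  ext c
  rw [Finset.mem_filter, Finset.mem_range, Finset.mem_Ico]
  constructor
  · rintro ⟨hc, he⟩
    constructor
    · have hlt : ¬ Tc n b i c ≤ j - 1 := by omega
      rw [Tc_le_iff n b h1 h2 hc] at hlt
      omega
    · rw [← he]
      rw [← Tc_le_iff n b h1 h2 hc]
  · rintro ⟨hlo, hhi⟩
    have hc : c < Lc n b i := lt_of_lt_of_le hhi (S_le n b h1 h2 hj)
    refine ⟨hc, ?_⟩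
    have h3 : Tc n b i c ≤ j := by rw [Tc_le_iff n b h1 h2 hc]; exact hhi
    have h4 : ¬ Tc n b i c ≤ j - 1 := by
      rw [Tc_le_iff n b h1 h2 hc]; omega
    omega

lemma Tc_count (n : ℕ) (b : ℕ → ℕ → ℕ) {i j : ℕ} (h1 : 1 ≤ i) (h2 : i ≤ n)
    (hij : i ≤ j) (hj : j ≤ n + 1) :
    entryCount (Lc n b) (Tc n b) j i = cnt n b i j := by
  rw [entryCount, Tc_filter_eq n b h1 h2 hij hj, Nat.card_Ico,
    S_step n b h1 hij]
  omega

lemma Tc_marginally_large (n : ℕ) (b : ℕ → ℕ → ℕ) (hn : 1 ≤ n) :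
    IsMarginallyLarge n (Lc n b) (Tc n b) := by
  refine ⟨?_, ?_, ?_, ?_, ?_, ?_, ?_, ?_⟩
  · intro i h; exact Lc_of_not n b h
  · intro i j h; exact if_neg h
  · intro i h1 h2; rw [Lc_rec n b h1 h2]; omega
  · intro i h1 h2
    rw [Lc_rec n b h1 (by omega)]; omega
  · intro i j h1 h2 hj
    exact ⟨Tc_ge n b h1 h2 hj, Tc_le_top n b h1 h2 hj⟩
  · intro i j h1 h2 hj
    have hj' : j < Lc n b i := by omega
    rw [Tc_le_iff n b h1 h2 hj']
    have := (Tc_le_iff n b h1 h2 hj (Tc n b i (j + 1))).mp le_rfl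
    omega
  · intro i c h1 h2 hc
    have h2' : i ≤ n := by omega
    have hc' : c < Lc n b i := by
      have := Lc_rec n b h1 h2'
      omega
    set j := Tc n b i c with hj
    have hji : i ≤ j := Tc_ge n b h1 h2' hc'
    rcases eq_or_lt_of_le hji with h | h
    · have := Tc_ge n b (by omega : 1 ≤ i + 1) (by omega : i + 1 ≤ n) hc
      omega
    · -- j ≥ i + 1
      have hjtop : j ≤ n + 1 := Tc_le_top n b h1 h2' hc'
      have hS1 : S n b i (j - 1) ≤ c := by
        have : ¬ Tc n b i c ≤ j - 1 := by omega
        rw [Tc_le_iff n b h1 h2' hc'] at this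
        omega
      have hS2 : Lc n b (i + 1) + 1 ≤ S n b i (j - 1) := by
        have hmem : i ∈ Finset.Icc i (j - 1) := by
          rw [Finset.mem_Icc]; omega
        have hle : cnt n b i i ≤ S n b i (j - 1) :=
          Finset.single_le_sum (f := fun v => cnt n b i v)
            (fun v _ => Nat.zero_le _) hmem
        rw [cnt, if_pos rfl] at hle
        exact hle
      have hS3 : S n b (i + 1) j ≤ Lc n b (i + 1) :=
        S_le n b (by omega) (by omega) hjtop
      have : ¬ Tc n b (i + 1) c ≤ j := by
        rw [Tc_le_iff n b (by omega) (by omega) hc]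
        omega
      omega
  · intro i h1 h2
    have h := Tc_count n b h1 h2 (le_refl i) (by omega)
    rw [cnt, if_pos rfl] at h
    exact h

lemma Tc_counts (n : ℕ) (b : ℕ → ℕ → ℕ) :
    ∀ i j, 1 ≤ i → i ≤ n → i < j → j ≤ n + 1 →
      entryCount (Lc n b) (Tc n b) j i = b j i := by
  intro i j h1 h2 hij hj
  rw [Tc_count n b h1 h2 (by omega) hj, cnt, if_neg (by omega)]

section Given

variable {n : ℕ} {L : ℕ → ℕ} {T : ℕ → ℕ → ℕ}

/-- Row-monotonicity extended to all pairs of cells. -/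
lemma row_mono (hml : IsMarginallyLarge n L T) {i : ℕ} (h1 : 1 ≤ i) (h2 : i ≤ n)
    {c c' : ℕ} (hcc : c ≤ c') (hc' : c' < L i) : T i c ≤ T i c' := by
  obtain ⟨-, -, -, -, -, h6, -, -⟩ := hml
  induction c', hcc using Nat.le_induction with
  | base => exact le_refl _
  | succ m hm ih =>
    exact le_trans (ih (by omega)) (h6 i m h1 h2 hc')

lemma row_total (hml : IsMarginallyLarge n L T) {i : ℕ} (h1 : 1 ≤ i) (h2 : i ≤ n) :
    L i = ∑ v ∈ Finset.Icc i (n + 1), entryCount L T v i := by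
  obtain ⟨-, -, -, -, h5, -, -, -⟩ := hml
  have := Finset.card_eq_sum_card_fiberwise
    (f := fun c => T i c) (s := Finset.range (L i)) (t := Finset.Icc i (n + 1))
    (fun c hc => by
      rw [Finset.mem_coe, Finset.mem_range] at hc
      rw [Finset.mem_coe, Finset.mem_Icc]
      exact (h5 i c h1 h2 hc))
  rw [Finset.card_range] at this
  exact this

lemma shape_rec (hml : IsMarginallyLarge n L T) (b : ℕ → ℕ → ℕ)
    (hcnt : ∀ i j, 1 ≤ i → i ≤ n → i < j → j ≤ n + 1 → entryCount L T j i = b j i)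
    {i : ℕ} (h1 : 1 ≤ i) (h2 : i ≤ n) :
    L i = L (i + 1) + 1 + B n b i := by
  have h8 := hml.2.2.2.2.2.2.2
  rw [row_total hml h1 h2]
  have hsplit : ∑ v ∈ Finset.Icc i (n + 1), entryCount L T v i
      = entryCount L T i i + ∑ v ∈ Finset.Icc (i + 1) (n + 1), entryCount L T v i := by
    rw [show Finset.Icc (i + 1) (n + 1) = Finset.Ioc i (n + 1) from
      (Finset.Icc_add_one_left_eq_Ioc _ _)]
    exact (Finset.add_sum_Ioc_eq_sum_Icc (by omega)).symm
  have hdiag : entryCount L T i i = L (i + 1) + 1 := h8 i h1 h2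
  have hoff : ∑ v ∈ Finset.Icc (i + 1) (n + 1), entryCount L T v i = B n b i := by
    apply Finset.sum_congr rfl
    intro v hv
    rw [Finset.mem_Icc] at hv
    exact hcnt i v h1 h2 (by omega) hv.2
  rw [hsplit, hdiag, hoff]

lemma shape_eq (hml : IsMarginallyLarge n L T) (b : ℕ → ℕ → ℕ)
    (hcnt : ∀ i j, 1 ≤ i → i ≤ n → i < j → j ≤ n + 1 → entryCount L T j i = b j i) :
    ∀ i, 1 ≤ i → i ≤ n → L i = Lc n b i := by
  have key : ∀ d i, 1 ≤ i → i ≤ n → n ≤ i + d → L i = Lc n b i := by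
    intro d
    induction d with
    | zero =>
      intro i h1 h2 h3
      have hin : i = n := by omega
      rw [shape_rec hml b hcnt h1 h2, Lc_rec n b h1 h2,
        hml.1 (i + 1) (by omega), Lc_of_not n b (by omega)]
    | succ d ih =>
      intro i h1 h2 h3
      by_cases hin : i = n
      · rw [shape_rec hml b hcnt h1 h2, Lc_rec n b h1 h2,
          hml.1 (i + 1) (by omega), Lc_of_not n b (by omega)]
      · rw [shape_rec hml b hcnt h1 h2, Lc_rec n b h1 h2,
          ih (i + 1) (by omega) (by omega) (by omega)]
  intro i h1 h2
  exact key (n - i) i h1 h2 (by omega)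

lemma down_closed_eq_range (s : Finset ℕ)
    (h : ∀ a b : ℕ, a ≤ b → b ∈ s → a ∈ s) : s = Finset.range s.card := by
  ext x
  rw [Finset.mem_range]
  constructor
  · intro hx
    have hsub : Finset.range (x + 1) ⊆ s := by
      intro y hy
      rw [Finset.mem_range] at hy
      exact h y x (by omega) hx
    have := Finset.card_le_card hsub
    rw [Finset.card_range] at this
    omega
  · intro hx
    by_contra hxs
    have hsub : s ⊆ Finset.range x := by
      intro y hy
      rw [Finset.mem_range]
      by_contra hyx
      exact hxs (h x y (by omega) hy)
    have := Finset.card_le_card hsub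
    rw [Finset.card_range] at this
    omega

/-- The main characterization: the entries of any marginally large tableau with
counts `b` are determined by the partial sums `S`. -/
lemma entry_le_iff (hml : IsMarginallyLarge n L T) (b : ℕ → ℕ → ℕ)
    (hcnt : ∀ i j, 1 ≤ i → i ≤ n → i < j → j ≤ n + 1 → entryCount L T j i = b j i)
    {i c : ℕ} (h1 : 1 ≤ i) (h2 : i ≤ n) (hc : c < L i) (j : ℕ) :
    T i c ≤ j ↔ c < S n b i j := by
  have h5 := hml.2.2.2.2.1
  have hLi : L i = Lc n b i := shape_eq hml b hcnt i h1 h2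
  have hLsucc : L (i + 1) = Lc n b (i + 1) := by
    by_cases hin : i = n
    · rw [hml.1 (i + 1) (by omega), Lc_of_not n b (by omega)]
    · exact shape_eq hml b hcnt (i + 1) (by omega) (by omega)
  rcases lt_or_ge j i with hj | hj
  · -- both sides false
    have := (h5 i c h1 h2 hc).1
    rw [S_lo n b hj]
    constructor <;> (intro h; omega)
  rcases le_or_gt j (n + 1) with hjn | hjn
  · -- main case: i ≤ j ≤ n + 1
    set F := (Finset.range (L i)).filter (fun c => T i c ≤ j) with hF
    have hdown : ∀ a a' : ℕ, a ≤ a' → a' ∈ F → a ∈ F := by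
      intro a a' haa ha'
      rw [hF, Finset.mem_filter, Finset.mem_range] at ha' ⊢
      exact ⟨by omega, le_trans (row_mono hml h1 h2 haa ha'.1) ha'.2⟩
    have hrange : F = Finset.range F.card := down_closed_eq_range F hdown
    have hcard : F.card = S n b i j := by
      have hfib := Finset.card_eq_sum_card_fiberwise
        (f := fun c => T i c) (s := F) (t := Finset.Icc i j)
        (fun c hc' => by
          rw [Finset.mem_coe, hF, Finset.mem_filter, Finset.mem_range] at hc'
          rw [Finset.mem_coe, Finset.mem_Icc]
          exact ⟨(h5 i c h1 h2 hc'.1).1, hc'.2⟩)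
      rw [hfib]
      rw [S]
      apply Finset.sum_congr rfl
      intro v hv
      rw [Finset.mem_Icc] at hv
      have hfeq : F.filter (fun c => T i c = v)
          = (Finset.range (L i)).filter (fun c => T i c = v) := by
        rw [hF, Finset.filter_filter]
        apply Finset.filter_congr
        intro c _
        constructor
        · rintro ⟨-, h⟩; exact h
        · intro h; exact ⟨by omega, h⟩
      rw [hfeq]
      -- fiber card equals cnt
      rcases eq_or_lt_of_le hv.1 with hvi | hvi
      · rw [← hvi, cnt, if_pos rfl, ← hLsucc]
        exact hml.2.2.2.2.2.2.2 i h1 h2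
      · rw [cnt, if_neg (by omega)]
        exact hcnt i v h1 h2 hvi (le_trans hv.2 hjn)
    have hmem : c ∈ F ↔ (c < L i ∧ T i c ≤ j) := by
      rw [hF, Finset.mem_filter, Finset.mem_range]
    constructor
    · intro h
      have : c ∈ F := hmem.mpr ⟨hc, h⟩
      rw [hrange, Finset.mem_range, hcard] at this
      exact this
    · intro h
      have : c ∈ F := by
        rw [hrange, Finset.mem_range, hcard]; exact h
      exact (hmem.mp this).2
  · -- j > n + 1: both sides true
    have hT := (h5 i c h1 h2 hc).2
    have : c < S n b i (n + 1) := by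
      rw [S_top n b h1 h2, ← hLi]; exact hc
    have hS := S_mono n b i (show n + 1 ≤ j by omega)
    constructor <;> intro _
    · omega
    · omega

lemma T_eq_Tc (hml : IsMarginallyLarge n L T) (b : ℕ → ℕ → ℕ)
    (hcnt : ∀ i j, 1 ≤ i → i ≤ n → i < j → j ≤ n + 1 → entryCount L T j i = b j i) :
    T = Tc n b := by
  funext i c
  by_cases h : 1 ≤ i ∧ i ≤ n ∧ c < L i
  · obtain ⟨h1, h2, hc⟩ := h
    have hLi : L i = Lc n b i := shape_eq hml b hcnt i h1 h2
    have hc' : c < Lc n b i := by rw [← hLi]; exact hc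
    have hA := (entry_le_iff hml b hcnt h1 h2 hc (Tc n b i c)).mpr
      ((Tc_le_iff n b h1 h2 hc' (Tc n b i c)).mp le_rfl)
    have hB := (Tc_le_iff n b h1 h2 hc' (T i c)).mpr
      ((entry_le_iff hml b hcnt h1 h2 hc (T i c)).mp le_rfl)
    omega
  · rw [hml.2.1 i c h, Tc]
    rw [if_neg ?_]
    intro ⟨h1, h2, hc⟩
    exact h ⟨h1, h2, by rwa [shape_eq hml b hcnt i h1 h2]⟩

end Given

end MLAux

/-- Marginally large tableaux are in bijection with arbitrary families
`(b_j^i)` of nonnegative integers (`1 ≤ i ≤ n`, `i < j ≤ n+1`), via the counts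
of non-diagonal entries; moreover the shape is determined:
row `i` has exactly
`1 + ∑_{r=i+1}^{n} (1 + ∑_{k=r+1}^{n+1} b_k^r) + ∑_{k=i+1}^{n+1} b_k^i` boxes. -/
theorem marginally_large_bij (n : ℕ) (hn : 1 ≤ n) (b : ℕ → ℕ → ℕ)
    (hb : ∀ j i, ¬(1 ≤ i ∧ i ≤ n ∧ i < j ∧ j ≤ n + 1) → b j i = 0) :
    (∃! LT : (ℕ → ℕ) × (ℕ → ℕ → ℕ),
      IsMarginallyLarge n LT.1 LT.2 ∧
      ∀ i j, 1 ≤ i → i ≤ n → i < j → j ≤ n + 1 →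
        entryCount LT.1 LT.2 j i = b j i) ∧
    (∀ L T, IsMarginallyLarge n L T →
      (∀ i j, 1 ≤ i → i ≤ n → i < j → j ≤ n + 1 →
        entryCount L T j i = b j i) →
      ∀ i, 1 ≤ i → i ≤ n →
        L i = 1 + (∑ r ∈ Finset.Icc (i + 1) n,
            (1 + ∑ k ∈ Finset.Icc (r + 1) (n + 1), b k r))
          + ∑ k ∈ Finset.Icc (i + 1) (n + 1), b k i) := by
  constructor
  · refine ⟨(MLAux.Lc n b, MLAux.Tc n b),
      ⟨MLAux.Tc_marginally_large n b hn, MLAux.Tc_counts n b⟩, ?_⟩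
    rintro ⟨L, T⟩ ⟨hml, hcnt⟩
    have hT : T = MLAux.Tc n b := MLAux.T_eq_Tc hml b hcnt
    have hL : L = MLAux.Lc n b := by
      funext i
      by_cases h : 1 ≤ i ∧ i ≤ n
      · exact MLAux.shape_eq hml b hcnt i h.1 h.2
      · rw [MLAux.Lc_of_not n b h]; exact hml.1 i h
    exact Prod.ext hL hT
  · intro L T hml hcnt i h1 h2
    have := MLAux.shape_eq hml b hcnt i h1 h2
    rw [this, MLAux.Lc, if_pos ⟨h1, h2⟩]
    rfl
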